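/- Let $A \in \mathbb{R}^{m \times n}$, let $[m] = \mathcal{P}_1 \uplus \cdots \uplus \mathcal{P}_p$ with $|\mathcal{P}_l| = m_l$, and fix targets $0 \le k_l \le m_l$. Let $S \subseteq [m]$ with $|S \cap \mathcal{P}_l| = t_l \le k_l$ for all $l$, set $t = \sum_l t_l$ and $k = \sum_l k_l$. Fix $j \in [p]$ with $t_j < k_j$ and $i \in \mathcal{P}_j \setminus S$. Let $B = A - \pi_S(A)$ with rows $b_1,\dots,b_m$ and $C_i = B - \pi_{\{i\}}(B)$ (projection with respect to the rows of $B$). Then $\sum_{T} \det(A_{S \cup \{i\} \cup T} A_{S \cup \{i\} \cup T}^T) = \det(A_S A_S^T) \cdot \|b_i\|^2 \cdot |c'(C_i C_i^T)|$, where the sum runs over all $T \subseteq [m] \setminus (S \cup \{i\})$ with $|T \cap \mathcal{P}_j| = k_j - t_j - 1$ and $|T \cap \mathcal{P}_l| = k_l - t_l$ for all $l \ne j$, and $c'(C_i C_i^T) = c_{m_1-k_1+t_1, \dots, m_j-k_j+t_j+1, \dots, m_p-k_p+t_p}(C_i C_i^T)$ is the indicated coefficient of the multivariate characteristic polynomial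 of $C_i C_i^T$. -/

import Mathlib

open Matrix Finset

section Helpers

/-- Identity rows outside `T` reduce det to the principal minor on `T`. -/
lemma det_piecewise_single' {ι R : Type*} [Fintype ι] [DecidableEq ι] [CommRing R]
    (M : Matrix ι ι R) (T : Finset ι) :
    Matrix.det (Matrix.of fun i j =>
        if i ∈ T then M i j else Pi.single (M := fun _ => R) i 1 j) =
      Matrix.det (Matrix.of fun i j : {x // x ∈ T} => M i.1 j.1) := by
  classical
  let e : {x // x ∈ T} ⊕ {x // ¬ x ∈ T} ≃ ι := Equiv.sumCompl _
  rw [← Matrix.det_submatrix_equiv_self e]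
  have : (Matrix.of fun i j =>
      if i ∈ T then M i j else Pi.single (M := fun _ => R) i 1 j).submatrix e e =
      Matrix.fromBlocks (Matrix.of fun i j : {x // x ∈ T} => M i.1 j.1)
        (Matrix.of fun (i : {x // x ∈ T}) (j : {x // ¬ x ∈ T}) => M i.1 j.1) 0 1 := by
    ext a b
    cases a with
    | inl a =>
      cases b with
      | inl b => simp [e, a.2]
      | inr b => simp [e, a.2]
    | inr a =>
      cases b with
      | inl b =>
        have : b.1 ≠ a.1 := fun h => a.2 (h ▸ b.2)
        simp [e, a.2, Pi.single_apply, this]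
      | inr b =>
        simp only [Matrix.submatrix_apply, Equiv.sumCompl_apply_inr, Matrix.of_apply, a.2,
          if_false, Matrix.fromBlocks_apply₂₂, Pi.single_apply, e]
        rw [Matrix.one_apply]
        simp [Subtype.ext_iff, eq_comm]
  rw [this, Matrix.det_fromBlocks_zero₂₁]
  simp

lemma det_add_diagonal' {ι R : Type*} [Fintype ι] [DecidableEq ι] [CommRing R]
    (M : Matrix ι ι R) (d : ι → R) :
    Matrix.det (Matrix.of fun i j => M i j + (if i = j then d i else 0)) =
      ∑ T : Finset ι, (∏ x ∈ Tᶜ, d x) *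
        Matrix.det (Matrix.of fun i j : {x // x ∈ T} => M i.1 j.1) := by
  classical
  have hrows : (Matrix.of fun i j => M i j + (if i = j then d i else 0)) =
      Matrix.of ((fun i => M i) + (fun i => d i • Pi.single (M := fun _ => R) i 1)) := by
    ext i j
    simp [Pi.single_apply, eq_comm]
  rw [hrows]
  rw [show Matrix.det (Matrix.of ((fun i => M i) + fun i => d i • Pi.single (M := fun _ => R) i 1))
      = (Matrix.detRowAlternating : _)
        ((fun i => M i) + fun i => d i • Pi.single (M := fun _ => R) i 1) from rfl]
  have hadd := (Matrix.detRowAlternating (R := R) (n := ι)).toMultilinearMap.map_add_univ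
    (fun i => M i) (fun i => d i • Pi.single (M := fun _ => R) i 1)
  simp only [AlternatingMap.coe_multilinearMap] at hadd
  rw [hadd]
  refine Finset.sum_congr rfl fun T _ => ?_
  have hpw : T.piecewise (fun i => M i) (fun i => d i • Pi.single (M := fun _ => R) i 1) =
      Tᶜ.piecewise (fun i => d i • (if i ∈ T then M i else Pi.single (M := fun _ => R) i 1))
        (fun i => if i ∈ T then M i else Pi.single (M := fun _ => R) i 1) := by
    ext x j
    by_cases hx : x ∈ T <;>
      simp [Finset.piecewise, hx]
  rw [hpw]
  have hsmul := (Matrix.detRowAlternating (R := R) (n := ι)).toMultilinearMap.map_piecewise_smul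
    d (fun i => if i ∈ T then M i else Pi.single (M := fun _ => R) i 1) Tᶜ
  simp only [AlternatingMap.coe_multilinearMap] at hsmul
  rw [hsmul, smul_eq_mul]
  congr 1
  have := det_piecewise_single' M T
  convert this using 2
  change Matrix.det _ = _
  congr 1
  ext i j
  by_cases h : i ∈ T <;> simp [h]

lemma gram_posSemidef' {n : ℕ} {ι : Type*} [Fintype ι] (v : ι → EuclideanSpace ℝ (Fin n)) :
    (Matrix.of fun i j : ι => (inner ℝ (v i) (v j) : ℝ)).PosSemidef := by
  have h : (Matrix.of fun i j : ι => (inner ℝ (v i) (v j) : ℝ)) =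
      (Matrix.of fun (i : ι) (x : Fin n) => v i x) *
        (Matrix.of fun (i : ι) (x : Fin n) => v i x)ᴴ := by
    ext i j
    simp [Matrix.mul_apply, PiLp.inner_apply, RCLike.inner_apply, mul_comm]
  rw [h]
  exact Matrix.posSemidef_self_mul_conjTranspose _

lemma gram_det_nonneg' {n : ℕ} {ι : Type*} [Fintype ι] [DecidableEq ι]
    (v : ι → EuclideanSpace ℝ (Fin n)) :
    0 ≤ (Matrix.of fun i j : ι => (inner ℝ (v i) (v j) : ℝ)).det := by
  have h := gram_posSemidef' v
  rw [h.1.det_eq_prod_eigenvalues]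
  refine Finset.prod_nonneg fun i _ => ?_
  simpa using h.eigenvalues_nonneg i

lemma gram_congr' {n : ℕ} {ι : Type*} [Fintype ι] (E : Matrix ι ι ℝ)
    (v : ι → EuclideanSpace ℝ (Fin n)) :
    (Matrix.of fun i j : ι => (inner ℝ ((∑ k, E i k • v k : EuclideanSpace ℝ (Fin n)))
        ((∑ k, E j k • v k : EuclideanSpace ℝ (Fin n))) : ℝ)) =
      E * (Matrix.of fun a b : ι => (inner ℝ (v a) (v b) : ℝ)) * Eᵀ := by
  ext i j
  simp only [Matrix.mul_apply, Matrix.of_apply, Matrix.transpose_apply]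
  simp only [sum_inner, inner_sum, real_inner_smul_left, real_inner_smul_right,
    Finset.sum_mul, Finset.mul_sum]
  exact Finset.sum_congr rfl fun a _ => Finset.sum_congr rfl fun b _ => by
    rw [real_inner_comm]; ring

end Helpers


/-- `res v S` is the matrix `B = v - π_S(v)`: its `i`-th row is the component of the `i`-th
row `v i` orthogonal to the span of the rows of `v` indexed by `S`. -/
noncomputable def res {m n : ℕ} (v : Fin m → EuclideanSpace ℝ (Fin n)) (S : Finset (Fin m)) :
    Fin m → EuclideanSpace ℝ (Fin n) :=
  fun i => v i - (Submodule.orthogonalProjection (Submodule.span ℝ (v '' (S : Set (Fin m)))) (v i) :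
    EuclideanSpace ℝ (Fin n))

/-- `gramDet v S = det(v_S v_S^T)`: the determinant of the Gram matrix of the rows of `v`
indexed by `S`. -/
noncomputable def gramDet {m n : ℕ} (v : Fin m → EuclideanSpace ℝ (Fin n))
    (S : Finset (Fin m)) : ℝ :=
  Matrix.det (Matrix.of fun i j : {x // x ∈ S} => (inner ℝ (v i.1) (v j.1) : ℝ))

/-- `gram v = v vᵀ`, the Gram matrix of the rows of `v`. -/
noncomputable def gram {m n : ℕ} (v : Fin m → EuclideanSpace ℝ (Fin n)) :
    Matrix (Fin m) (Fin m) ℝ :=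
  Matrix.of fun i j => (inner ℝ (v i) (v j) : ℝ)

/-- The coefficient `c_{e₁,…,e_p}(M)` of the monomial `x₁^{e₁} ⋯ x_p^{e_p}` in the multivariate
characteristic polynomial `det(M - x₁I₁ - ⋯ - x_pI_p)`, where the partition
`[m] = 𝒫₁ ⊎ ⋯ ⊎ 𝒫_p` is encoded by the labelling function `part` (so `𝒫_l = part⁻¹(l)`),
and `I_l` is the diagonal 0/1 matrix supported on `𝒫_l`. -/
noncomputable def mcharCoeff {m p : ℕ} (M : Matrix (Fin m) (Fin m) ℝ) (part : Fin m → Fin p)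
    (e : Fin p → ℕ) : ℝ :=
  MvPolynomial.coeff (Finsupp.equivFunOnFinite.symm e)
    (Matrix.det (Matrix.of fun i j =>
      MvPolynomial.C (M i j) - (if i = j then MvPolynomial.X (part i) else 0)))


section MoreHelpers

lemma prod_X_eq_monomial' {m p : ℕ} (s : Finset (Fin m)) (f : Fin m → Fin p) :
    ∏ x ∈ s, (MvPolynomial.X (f x) : MvPolynomial (Fin p) ℝ) =
      MvPolynomial.monomial (∑ x ∈ s, Finsupp.single (f x) 1) 1 := by
  classical
  induction s using Finset.induction_on with
  | empty => simp
  | insert x s hx ih =>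
    rw [Finset.prod_insert hx, Finset.sum_insert hx, ih, MvPolynomial.X,
      MvPolynomial.monomial_mul, one_mul]

lemma mcharCoeff_eq' {m p : ℕ} (M : Matrix (Fin m) (Fin m) ℝ) (part : Fin m → Fin p)
    (e : Fin p → ℕ) :
    mcharCoeff M part e = (-1 : ℝ) ^ (∑ l, e l) *
      ∑ T ∈ Finset.univ.filter (fun T : Finset (Fin m) =>
          ∀ l, (Tᶜ.filter (fun x => part x = l)).card = e l),
        Matrix.det (Matrix.of fun i j : {x // x ∈ T} => M i.1 j.1) := by
  classical
  unfold mcharCoeff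
  have hM : (Matrix.of fun i j => MvPolynomial.C (M i j) -
      (if i = j then MvPolynomial.X (part i) else 0)) =
      (Matrix.of fun i j => (Matrix.of fun a b => (MvPolynomial.C (M a b) :
          MvPolynomial (Fin p) ℝ)) i j +
        (if i = j then -MvPolynomial.X (part i) else 0)) := by
    ext i j
    by_cases h : i = j <;> simp [h, sub_eq_add_neg]
  rw [hM, det_add_diagonal']
  rw [MvPolynomial.coeff_sum]
  have hterm : ∀ T : Finset (Fin m),
      MvPolynomial.coeff (Finsupp.equivFunOnFinite.symm e)
        ((∏ x ∈ Tᶜ, -MvPolynomial.X (part x)) *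
          Matrix.det (Matrix.of fun i j : {x // x ∈ T} =>
            (MvPolynomial.C (M i.1 j.1) : MvPolynomial (Fin p) ℝ))) =
      if (∀ l, (Tᶜ.filter (fun x => part x = l)).card = e l) then
        (-1 : ℝ) ^ (Tᶜ.card) * Matrix.det (Matrix.of fun i j : {x // x ∈ T} => M i.1 j.1)
      else 0 := by
    intro T
    have hdet : Matrix.det (Matrix.of fun i j : {x // x ∈ T} =>
        (MvPolynomial.C (M i.1 j.1) : MvPolynomial (Fin p) ℝ)) =
        MvPolynomial.C (Matrix.det (Matrix.of fun i j : {x // x ∈ T} => M i.1 j.1)) := by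
      exact (RingHom.map_det (MvPolynomial.C : ℝ →+* MvPolynomial (Fin p) ℝ)
        (Matrix.of fun i j : {x // x ∈ T} => M i.1 j.1)).symm
    have hprod : (∏ x ∈ Tᶜ, -MvPolynomial.X (part x) : MvPolynomial (Fin p) ℝ) =
        MvPolynomial.C ((-1 : ℝ) ^ Tᶜ.card) *
          MvPolynomial.monomial (∑ x ∈ Tᶜ, Finsupp.single (part x) 1) 1 := by
      rw [show (fun x => -MvPolynomial.X (part x) : Fin m → MvPolynomial (Fin p) ℝ) =
          (fun x => (-1) * MvPolynomial.X (part x)) by funext x; ring]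
      rw [Finset.prod_mul_distrib, Finset.prod_const, prod_X_eq_monomial']
      congr 1
      simp
    rw [hdet, hprod, MvPolynomial.C_mul_monomial, mul_one, MvPolynomial.C_apply,
      MvPolynomial.monomial_mul, add_zero, MvPolynomial.coeff_monomial]
    have hcond : ((∑ x ∈ Tᶜ, Finsupp.single (part x) 1) = Finsupp.equivFunOnFinite.symm e) ↔
        (∀ l, (Tᶜ.filter (fun x => part x = l)).card = e l) := by
      rw [DFunLike.ext_iff]
      apply forall_congr'
      intro l
      rw [Finset.card_filter]
      simp [Finsupp.finset_sum_apply, Finsupp.single_apply, Finsupp.equivFunOnFinite]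
    rw [if_congr hcond rfl rfl]
  simp only [Matrix.of_apply]
  rw [Finset.sum_congr rfl (fun T _ => hterm T), ← Finset.sum_filter, Finset.mul_sum]
  apply Finset.sum_congr rfl
  intro T hT
  rw [Finset.mem_filter] at hT
  congr 2
  rw [Finset.card_eq_sum_card_fiberwise (f := part) (t := Finset.univ) (fun x _ => mem_univ _)]
  exact Finset.sum_congr rfl fun l _ => hT.2 l

lemma res_apply_mem' {m n : ℕ} (v : Fin m → EuclideanSpace ℝ (Fin n)) (S : Finset (Fin m))
    {s : Fin m} (hs : s ∈ S) : res v S s = 0 := by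
  have h : (Submodule.orthogonalProjection (Submodule.span ℝ (v '' (S : Set (Fin m)))) (v s) :
      EuclideanSpace ℝ (Fin n)) = v s :=
    Submodule.starProjection_eq_self_iff.mpr (Submodule.subset_span (Set.mem_image_of_mem _ hs))
  simp [res, h]

lemma inner_res_eq_zero' {m n : ℕ} (v : Fin m → EuclideanSpace ℝ (Fin n)) (S : Finset (Fin m))
    {s : Fin m} (hs : s ∈ S) (u : Fin m) : (inner ℝ (v s) (res v S u) : ℝ) = 0 := by
  have hmem : res v S u ∈ (Submodule.span ℝ (v '' (S : Set (Fin m))))ᗮ :=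
    Submodule.sub_starProjection_mem_orthogonal _
  exact (Submodule.mem_orthogonal _ _).mp hmem _
    (Submodule.subset_span (Set.mem_image_of_mem _ hs))

lemma gramDet_union' {m n : ℕ} (v : Fin m → EuclideanSpace ℝ (Fin n)) (S U : Finset (Fin m))
    (hd : Disjoint S U) :
    gramDet v (S ∪ U) = gramDet v S * gramDet (res v S) U := by
  classical
  set K := Submodule.span ℝ (v '' (S : Set (Fin m))) with hK
  have hproj : ∀ u : Fin m, ∃ g : {x // x ∈ S} → ℝ,
      ∑ s : {x // x ∈ S}, g s • v s.1 = (Submodule.orthogonalProjection K (v u) :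
        EuclideanSpace ℝ (Fin n)) := by
    intro u
    have hmem : (Submodule.orthogonalProjection K (v u) : EuclideanSpace ℝ (Fin n)) ∈ K :=
      (Submodule.orthogonalProjection K (v u)).2
    have himg : K = Submodule.span ℝ (Set.range (fun s : {x // x ∈ S} => v s.1)) := by
      rw [hK]
      congr 1
      ext x
      simp [Set.mem_image, Set.mem_range]
    have hmem' : (Submodule.orthogonalProjection K (v u) : EuclideanSpace ℝ (Fin n)) ∈
        Submodule.span ℝ (Set.range (fun s : {x // x ∈ S} => v s.1)) := by
      rw [← himg]; exact hmem
    rw [Submodule.mem_span_range_iff_exists_fun] at hmem'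
    exact hmem'
  choose G hG using hproj
  set w : {x // x ∈ S} ⊕ {x // x ∈ U} → EuclideanSpace ℝ (Fin n) :=
    Sum.elim (fun s => v s.1) (fun u => res v S u.1) with hw
  set E : Matrix ({x // x ∈ S} ⊕ {x // x ∈ U}) ({x // x ∈ S} ⊕ {x // x ∈ U}) ℝ :=
    Matrix.fromBlocks 1 0 (Matrix.of fun u s => G u.1 s) 1 with hE
  have hrow : ∀ i, (∑ k, E i k • w k) = Sum.elim (fun s : {x // x ∈ S} => v s.1)
      (fun u : {x // x ∈ U} => v u.1) i := by
    intro i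
    cases i with
    | inl s =>
      have h1 : ∑ a₁ : { x // x ∈ S }, E (Sum.inl s) (Sum.inl a₁) • w (Sum.inl a₁) = v s.1 := by
        have : ∀ a₁ : { x // x ∈ S }, E (Sum.inl s) (Sum.inl a₁) • w (Sum.inl a₁) =
            (if s = a₁ then (1:ℝ) else 0) • v a₁.1 := by
          intro a₁
          simp [hE, hw, Matrix.one_apply]
        rw [Finset.sum_congr rfl fun a _ => this a]
        simp [ite_smul]
      have h2 : ∑ a₂ : { x // x ∈ U }, E (Sum.inl s) (Sum.inr a₂) • w (Sum.inr a₂) = 0 := by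
        have : ∀ a₂ : { x // x ∈ U }, E (Sum.inl s) (Sum.inr a₂) • w (Sum.inr a₂) = 0 := by
          intro a₂
          simp [hE]
        rw [Finset.sum_congr rfl fun a _ => this a]
        simp
      rw [Fintype.sum_sum_type, h1, h2, add_zero]
      rfl
    | inr u =>
      rw [Fintype.sum_sum_type]
      have h1 : ∑ a₁ : { x // x ∈ S }, E (Sum.inr u) (Sum.inl a₁) • w (Sum.inl a₁) =
          (Submodule.orthogonalProjection K (v u.1) : EuclideanSpace ℝ (Fin n)) := by
        rw [← hG u.1]
        exact Finset.sum_congr rfl fun a _ => rfl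
      have h2 : ∑ a₂ : { x // x ∈ U }, E (Sum.inr u) (Sum.inr a₂) • w (Sum.inr a₂) =
          res v S u.1 := by
        have : ∀ a₂ : { x // x ∈ U }, E (Sum.inr u) (Sum.inr a₂) • w (Sum.inr a₂) =
            (if u = a₂ then (1:ℝ) else 0) • res v S a₂.1 := by
          intro a₂
          simp [hE, hw, Matrix.one_apply]
        rw [Finset.sum_congr rfl fun a _ => this a]
        simp [ite_smul]
      rw [h1, h2]
      show _ = v u.1
      rw [res]
      abel
  have hcongr := gram_congr' E w
  have hmat : (Matrix.of fun i j => (inner ℝ ((∑ k, E i k • w k))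
      ((∑ k, E j k • w k)) : ℝ)) =
      (Matrix.of fun i j : {x // x ∈ S} ⊕ {x // x ∈ U} =>
        (inner ℝ (v (Sum.elim Subtype.val Subtype.val i)) (v (Sum.elim Subtype.val Subtype.val j))
          : ℝ)) := by
    ext a b
    rw [Matrix.of_apply, Matrix.of_apply, hrow a, hrow b]
    cases a <;> cases b <;> rfl
  rw [hmat] at hcongr
  have hblock : (Matrix.of fun a b : {x // x ∈ S} ⊕ {x // x ∈ U} =>
      (inner ℝ (w a) (w b) : ℝ)) =
      Matrix.fromBlocks
        (Matrix.of fun i j : {x // x ∈ S} => (inner ℝ (v i.1) (v j.1) : ℝ)) 0 0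
        (Matrix.of fun i j : {x // x ∈ U} => (inner ℝ (res v S i.1) (res v S j.1) : ℝ)) := by
    ext a b
    cases a with
    | inl a =>
      cases b with
      | inl b => rfl
      | inr b =>
        simp only [hw, Matrix.of_apply, Sum.elim_inl, Sum.elim_inr,
          Matrix.fromBlocks_apply₁₂, Matrix.zero_apply]
        exact inner_res_eq_zero' v S a.2 b.1
    | inr a =>
      cases b with
      | inl b =>
        simp only [hw, Matrix.of_apply, Sum.elim_inl, Sum.elim_inr,
          Matrix.fromBlocks_apply₂₁, Matrix.zero_apply]
        rw [real_inner_comm]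
        exact inner_res_eq_zero' v S b.2 a.1
      | inr b => rfl
  have hSU : ∀ u : {x // x ∈ U}, u.1 ∉ S := fun u => Finset.disjoint_right.mp hd u.2
  let e : {x // x ∈ S} ⊕ {x // x ∈ U} ≃ {x // x ∈ S ∪ U} :=
    { toFun := Sum.elim (fun s => ⟨s.1, Finset.mem_union_left U s.2⟩)
        (fun u => ⟨u.1, Finset.mem_union_right S u.2⟩)
      invFun := fun x => if h : x.1 ∈ S then Sum.inl ⟨x.1, h⟩
        else Sum.inr ⟨x.1, (Finset.mem_union.mp x.2).resolve_left h⟩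
      left_inv := by
        rintro (s | u)
        · simp [s.2]
        · simp [hSU u]
      right_inv := by
        intro x
        by_cases h : x.1 ∈ S <;> simp [h] }
  have hre : gramDet v (S ∪ U) = Matrix.det (Matrix.of fun i j : {x // x ∈ S} ⊕ {x // x ∈ U} =>
      (inner ℝ (v (Sum.elim Subtype.val Subtype.val i)) (v (Sum.elim Subtype.val Subtype.val j))
        : ℝ)) := by
    rw [gramDet, ← Matrix.det_submatrix_equiv_self e]
    congr 1
    ext a b
    cases a <;> cases b <;> rfl
  rw [hre]
  have hdetE : E.det = 1 := by
    rw [hE, Matrix.det_fromBlocks_zero₁₂]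
    simp
  rw [hcongr, Matrix.det_mul, Matrix.det_mul, Matrix.det_transpose, hdetE, one_mul, mul_one]
  rw [hblock, Matrix.det_fromBlocks_zero₁₂]
  rfl

lemma gramDet_singleton' {m n : ℕ} (v : Fin m → EuclideanSpace ℝ (Fin n)) (i : Fin m) :
    gramDet v {i} = ‖v i‖ ^ 2 := by
  haveI : Unique {x // x ∈ ({i} : Finset (Fin m))} :=
    ⟨⟨⟨i, Finset.mem_singleton_self i⟩⟩, fun x => Subtype.ext (Finset.mem_singleton.mp x.2)⟩
  rw [gramDet, Matrix.det_unique, Matrix.of_apply]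
  have hd : ((default : {x // x ∈ ({i} : Finset (Fin m))}) : Fin m) = i :=
    Finset.mem_singleton.mp (Subtype.mem _)
  rw [hd, ← real_inner_self_eq_norm_sq]

lemma gramDet_zero_row' {m n : ℕ} (v : Fin m → EuclideanSpace ℝ (Fin n)) (T : Finset (Fin m))
    {x : Fin m} (hx : x ∈ T) (hv : v x = 0) : gramDet v T = 0 := by
  apply Matrix.det_eq_zero_of_row_eq_zero (⟨x, hx⟩ : {a // a ∈ T})
  intro j
  simp [hv]

lemma gramDet_nonneg'' {m n : ℕ} (v : Fin m → EuclideanSpace ℝ (Fin n)) (T : Finset (Fin m)) :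
    0 ≤ gramDet v T :=
  gram_det_nonneg' (fun x : {a // a ∈ T} => v x.1)

end MoreHelpers

/-- with partition `[m] = 𝒫₁ ⊎ ⋯ ⊎ 𝒫_p` (`|𝒫_l| = m_l`), targets `k_l ≤ m_l`,
a set `S` with `|S ∩ 𝒫_l| = t_l ≤ k_l`, an index `j` with `t_j < k_j`, and `i ∈ 𝒫_j \ S`,
letting `B = A - π_S(A)` and `C_i = B - π_{{i}}(B)`, the sum of `det(A_{S∪{i}∪T} A_{S∪{i}∪T}^T)`
over all `T ⊆ [m] \ (S∪{i})` with `|T ∩ 𝒫_j| = k_j - t_j - 1` and `|T ∩ 𝒫_l| = k_l - t_l`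
for `l ≠ j` equals `det(A_S A_S^T) ⬝ ‖b_i‖² ⬝ |c'(C_i C_i^T)|`, where
`c' = c_{m₁-k₁+t₁, …, m_j-k_j+t_j+1, …, m_p-k_p+t_p}`. -/
theorem statement6 {m n p : ℕ} (A : Fin m → EuclideanSpace ℝ (Fin n)) (part : Fin m → Fin p)
    (mi ki ti : Fin p → ℕ)
    (hmi : ∀ l, (Finset.univ.filter (fun x => part x = l)).card = mi l)
    (hki : ∀ l, ki l ≤ mi l)
    (S : Finset (Fin m))
    (hti : ∀ l, (S.filter (fun x => part x = l)).card = ti l)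
    (htk : ∀ l, ti l ≤ ki l)
    (j : Fin p) (hj : ti j < ki j)
    (i : Fin m) (hij : part i = j) (hiS : i ∉ S) :
    (∑ T ∈ Finset.univ.filter (fun T : Finset (Fin m) =>
        T ⊆ (insert i S)ᶜ ∧ ∀ l, (T.filter (fun x => part x = l)).card =
          (if l = j then ki j - ti j - 1 else ki l - ti l)),
        gramDet A (insert i (S ∪ T)))
      = gramDet A S * ‖res A S i‖ ^ 2 *
        |mcharCoeff (gram (res (res A S) {i})) part
          (fun l => if l = j then mi j - ki j + ti j + 1 else mi l - ki l + ti l)| := by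
  classical
  set B := res A S with hB
  set C := res B {i} with hC
  set e' : Fin p → ℕ := fun l => if l = j then mi j - ki j + ti j + 1 else mi l - ki l + ti l
    with he'
  -- rows of C indexed by insert i S vanish
  have hCzero : ∀ x ∈ insert i S, C x = 0 := by
    intro x hx
    rcases Finset.mem_insert.mp hx with h | h
    · subst h
      exact res_apply_mem' B {x} (Finset.mem_singleton_self x)
    · have hBx : B x = 0 := res_apply_mem' A S h
      show B x - _ = 0
      rw [hBx]
      simp
  -- count bookkeeping
  have hsplit : ∀ (T : Finset (Fin m)) (l : Fin p),
      (T.filter (fun x => part x = l)).card + (Tᶜ.filter (fun x => part x = l)).card = mi l := by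
    intro T l
    rw [← hmi l, ← Finset.card_union_of_disjoint
      (Finset.disjoint_filter_filter disjoint_compl_right), ← Finset.filter_union,
      Finset.union_compl]
  have hcard_le : ∀ (T : Finset (Fin m)) (l : Fin p),
      (T.filter (fun x => part x = l)).card ≤ mi l := by
    intro T l
    rw [← hsplit T l]
    exact Nat.le_add_right _ _
  have hmem_iff : ∀ T : Finset (Fin m),
      (∀ l, (Tᶜ.filter (fun x => part x = l)).card = e' l) ↔
        (∀ l, (T.filter (fun x => part x = l)).card =
          (if l = j then ki j - ti j - 1 else ki l - ti l)) := by
    intro T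
    constructor
    · intro h l
      have h1 := hsplit T l
      have h2 := h l
      simp only [he'] at h2
      by_cases hl : l = j
      · subst hl
        simp only [eq_self_iff_true, if_true] at h2 ⊢
        have := hki l; have := htk l
        omega
      · simp only [if_neg hl] at h2 ⊢
        have := hki l; have := htk l
        omega
    · intro h l
      have h1 := hsplit T l
      have h2 := h l
      simp only [he']
      by_cases hl : l = j
      · subst hl
        simp only [eq_self_iff_true, if_true] at h2 ⊢
        have := hki l; have := htk l
        omega
      · simp only [if_neg hl] at h2 ⊢
        have := hki l; have := htk l
        omega
  -- the char coefficient
  have hmc := mcharCoeff_eq' (gram C) part e'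
  have hminor : ∀ T : Finset (Fin m),
      Matrix.det (Matrix.of fun a b : {x // x ∈ T} => gram C a.1 b.1) = gramDet C T :=
    fun _ => rfl
  have habs : |mcharCoeff (gram C) part e'| =
      ∑ T ∈ Finset.univ.filter (fun T : Finset (Fin m) =>
          ∀ l, (Tᶜ.filter (fun x => part x = l)).card = e' l), gramDet C T := by
    rw [hmc]
    rw [Finset.sum_congr rfl fun T _ => hminor T]
    rw [abs_mul, abs_pow, abs_neg, abs_one, one_pow, one_mul]
    exact abs_of_nonneg (Finset.sum_nonneg fun T _ => gramDet_nonneg'' C T)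
  rw [habs]
  -- reduce the char-poly sum to the LHS index set
  have hsum_eq : (∑ T ∈ Finset.univ.filter (fun T : Finset (Fin m) =>
        ∀ l, (Tᶜ.filter (fun x => part x = l)).card = e' l), gramDet C T) =
      ∑ T ∈ Finset.univ.filter (fun T : Finset (Fin m) =>
        T ⊆ (insert i S)ᶜ ∧ ∀ l, (T.filter (fun x => part x = l)).card =
          (if l = j then ki j - ti j - 1 else ki l - ti l)), gramDet C T := by
    symm
    apply Finset.sum_subset
    · intro T hT
      rw [Finset.mem_filter] at hT ⊢
      exact ⟨mem_univ _, (hmem_iff T).mpr hT.2.2⟩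
    · intro T hT hT'
      rw [Finset.mem_filter] at hT hT'
      have hcnt := (hmem_iff T).mp hT.2
      have hnsub : ¬ T ⊆ (insert i S)ᶜ := by
        intro hsub
        exact hT' ⟨mem_univ _, hsub, hcnt⟩
      obtain ⟨x, hxT, hxn⟩ := Finset.not_subset.mp hnsub
      rw [Finset.mem_compl, not_not] at hxn
      exact gramDet_zero_row' C T hxT (hCzero x hxn)
  rw [hsum_eq]
  -- rewrite each LHS term
  rw [Finset.mul_sum]
  apply Finset.sum_congr rfl
  intro T hT
  rw [Finset.mem_filter] at hT
  obtain ⟨-, hTsub, -⟩ := hT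
  have hTS : ∀ x ∈ T, x ∉ insert i S := fun x hx => Finset.mem_compl.mp (hTsub hx)
  have hiT : i ∉ T := fun h => hTS i h (Finset.mem_insert_self i S)
  have h1 : insert i (S ∪ T) = S ∪ insert i T := by
    ext x
    simp only [Finset.mem_insert, Finset.mem_union]
    tauto
  have hd1 : Disjoint S (insert i T) := by
    rw [Finset.disjoint_left]
    intro a haS ha
    rcases Finset.mem_insert.mp ha with h | h
    · exact hiS (h ▸ haS)
    · exact hTS a h (Finset.mem_insert_of_mem haS)
  have hd2 : Disjoint ({i} : Finset (Fin m)) T := by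
    rw [Finset.disjoint_left]
    intro a ha haT
    rw [Finset.mem_singleton] at ha
    exact hiT (ha ▸ haT)
  rw [h1, gramDet_union' A S (insert i T) hd1, Finset.insert_eq,
    gramDet_union' B {i} T hd2, gramDet_singleton']
  rw [← hC]
  ring
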